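/- Let d₁, d₂ ≥ 1, let D = {D_i}_{i=1}^{d₁²} be a measure basis for d₁×d₁ complex matrices and E = {E_j}_{j=1}^{d₂²} a measure basis for d₂×d₂ complex matrices, both with all weights strictly positive. Then the elementwise Kronecker products {D_i ⊗ E_j} form a measure basis for (d₁d₂)×(d₁d₂) complex matrices with weights (tr D_i)(tr E_j), its Gram matrix is the Kronecker product of the Gram matrices of D and E (hence its Born matrix is the Kronecker product of their Born matrices), and its principal Wigner basis is the elementwise Kronecker product of the principal Wigner bases: PW(D⊗E)_{(i,j)} = PW(D)_i ⊗ PW(E)_j. In particular, if D and E are MICs then so is D⊗E. -/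

import Mathlib

open Matrix BigOperators
open scoped ComplexOrder Kronecker

/-- A measure basis: a linearly independent family of `d²` Hermitian `d×d` complex
matrices summing to the identity, with nonnegative traces. -/
def IsMeasureBasis {d : ℕ} (L : Fin (d ^ 2) → Matrix (Fin d) (Fin d) ℂ) : Prop :=
  (∀ i, (L i).IsHermitian) ∧ LinearIndependent ℝ L ∧ (∑ i, L i) = 1 ∧ ∀ i, 0 ≤ ((L i).trace).re

/-- A Wigner basis: an orthogonal measure basis. -/
def IsWignerBasis {d : ℕ} (L : Fin (d ^ 2) → Matrix (Fin d) (Fin d) ℂ) : Prop :=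
  IsMeasureBasis L ∧ ∀ i j, i ≠ j → (L i * L j).trace = 0

/-- The rescaled frame operator `S_L(X) = ∑ⱼ (tr(X Lⱼ)/lⱼ) Lⱼ`. -/
noncomputable def rsFrameOp {n : Type*} [Fintype n] {m : Type*} [Fintype m] [DecidableEq m]
    (L : n → Matrix m m ℂ) (X : Matrix m m ℂ) : Matrix m m ℂ :=
  ∑ j, (((X * L j).trace) / ((L j).trace)) • L j

/-- A map on matrices that is ℝ-linear, Hermiticity-preserving, self-adjoint with respect to
the Hilbert–Schmidt inner product on Hermitian matrices, and positive. -/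
def IsPosSelfAdjMap {m : Type*} [Fintype m]
    (T : Matrix m m ℂ → Matrix m m ℂ) : Prop :=
  IsLinearMap ℝ T ∧ (∀ X, X.IsHermitian → (T X).IsHermitian) ∧
  (∀ X Y, X.IsHermitian → Y.IsHermitian → (T X * Y).trace = (X * T Y).trace) ∧
  (∀ X, X.IsHermitian → 0 ≤ ((X * T X).trace).re)

/-- `T` is the (unique) positive self-adjoint inverse square root of the rescaled frame
operator of `L`, i.e. `S_L ∘ T ∘ T = id` on Hermitian matrices; `PW(L) i = T (L i)`. -/
def IsInvSqrtOfFrameOp {n : Type*} [Fintype n] {m : Type*} [Fintype m] [DecidableEq m]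
    (L : n → Matrix m m ℂ) (T : Matrix m m ℂ → Matrix m m ℂ) : Prop :=
  IsPosSelfAdjMap T ∧ ∀ X : Matrix m m ℂ, X.IsHermitian → rsFrameOp L (T (T X)) = X

section AuxiliaryLemmas

open Complex

/-- The submodule of Hermitian matrices. -/
noncomputable abbrev HermM (n : Type*) [Fintype n] : Submodule ℝ (Matrix n n ℂ) :=
  selfAdjoint.submodule ℝ (Matrix n n ℂ)

lemma herm_trace_re {n : Type*} [Fintype n] {X : Matrix n n ℂ} (hX : X.IsHermitian) :
    X.trace = (X.trace.re : ℂ) := by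
  have h : star X.trace = X.trace := by
    rw [← Matrix.trace_conjTranspose, hX.eq]
  exact (Complex.conj_eq_iff_re.mp h).symm

lemma herm_mul_trace_re {n : Type*} [Fintype n] {X Y : Matrix n n ℂ}
    (hX : X.IsHermitian) (hY : Y.IsHermitian) :
    (X * Y).trace = (((X * Y).trace).re : ℂ) := by
  have h : star (X * Y).trace = (X * Y).trace := by
    rw [← Matrix.trace_conjTranspose, Matrix.conjTranspose_mul, hX.eq, hY.eq,
      Matrix.trace_mul_comm]
  exact (Complex.conj_eq_iff_re.mp h).symm

lemma real_smul_matC {m n : Type*} (r : ℝ) (X : Matrix m n ℂ) : r • X = (r : ℂ) • X := by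
  ext i j
  simp [Complex.real_smul]

lemma kron_conjTranspose {m n : Type*} (A : Matrix m m ℂ) (B : Matrix n n ℂ) :
    (A ⊗ₖ B)ᴴ = Aᴴ ⊗ₖ Bᴴ := by
  ext ⟨i, j⟩ ⟨k, l⟩
  simp [Matrix.conjTranspose_apply, mul_comm]

lemma kron_isHermitian {m n : Type*} {A : Matrix m m ℂ} {B : Matrix n n ℂ}
    (hA : A.IsHermitian) (hB : B.IsHermitian) : (A ⊗ₖ B).IsHermitian := by
  unfold Matrix.IsHermitian
  rw [kron_conjTranspose, hA.eq, hB.eq]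

lemma sum_smul_kronC {ι κ m n : Type*} [Fintype ι] [Fintype κ]
    (a : ι → ℂ) (P : ι → Matrix m m ℂ) (b : κ → ℂ) (Q : κ → Matrix n n ℂ) :
    (∑ i, a i • P i) ⊗ₖ (∑ j, b j • Q j) = ∑ p : ι × κ, (a p.1 * b p.2) • (P p.1 ⊗ₖ Q p.2) := by
  ext ⟨x, y⟩ ⟨z, w⟩
  simp only [Matrix.kroneckerMap_apply, Matrix.sum_apply, Matrix.smul_apply, smul_eq_mul,
    Finset.sum_mul_sum, ← Finset.univ_product_univ, Finset.sum_product]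
  congr 1; ext i; congr 1; ext j; ring

lemma kron_posSemidef {m n : Type*} [Fintype m] [Fintype n]
    {R : Type*} [RCLike R] {A : Matrix m m R} {B : Matrix n n R}
    (hA : A.PosSemidef) (hB : B.PosSemidef) : (A ⊗ₖ B).PosSemidef := by
  exact hA.kronecker hB

lemma trace_mul_conjTranspose_self' {n : Type*} [Fintype n] (X : Matrix n n ℂ) :
    (X * Xᴴ).trace = ((∑ i, ∑ j, Complex.normSq (X i j) : ℝ) : ℂ) := by
  simp only [Matrix.trace, Matrix.diag, Matrix.mul_apply, Matrix.conjTranspose_apply,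
    Complex.star_def, Complex.mul_conj]
  push_cast
  rfl

/-- The Hilbert–Schmidt real inner product on Hermitian matrices. -/
noncomputable def hermCore (n : Type*) [Fintype n] : InnerProductSpace.Core ℝ (HermM n) where
  inner x y := (((x : Matrix n n ℂ) * (y : Matrix n n ℂ)).trace).re
  conj_inner_symm x y := by
    simp only [starRingEnd_apply, star_trivial]
    rw [Matrix.trace_mul_comm]
  re_inner_nonneg x := by
    simp only [RCLike.re_to_real]
    have hx : ((x : Matrix n n ℂ))ᴴ = (x : Matrix n n ℂ) := x.2
    nth_rewrite 2 [← hx]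
    rw [trace_mul_conjTranspose_self', Complex.ofReal_re]
    exact Finset.sum_nonneg fun i _ => Finset.sum_nonneg fun j _ => Complex.normSq_nonneg _
  add_left x y z := by
    push_cast
    rw [Matrix.add_mul, Matrix.trace_add, Complex.add_re]
  smul_left x y r := by
    simp only [Submodule.coe_smul]
    rw [Matrix.smul_mul]
    simp [Complex.real_smul, Complex.mul_re]
  definite x h := by
    replace h : (((x : Matrix n n ℂ)) * (x : Matrix n n ℂ)).trace.re = 0 := h
    have hx : ((x : Matrix n n ℂ))ᴴ = (x : Matrix n n ℂ) := x.2
    rw [show ((x : Matrix n n ℂ) * (x : Matrix n n ℂ)) = (x : Matrix n n ℂ) * ((x : Matrix n n ℂ))ᴴ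
      from by rw [hx]] at h
    rw [trace_mul_conjTranspose_self', Complex.ofReal_re] at h
    have hz : ∀ i j, Complex.normSq ((x : Matrix n n ℂ) i j) = 0 := by
      intro i j
      have h1 : ∀ i ∈ Finset.univ, (0:ℝ) ≤ ∑ j, Complex.normSq ((x : Matrix n n ℂ) i j) :=
        fun i _ => Finset.sum_nonneg fun j _ => Complex.normSq_nonneg _
      have h2 := (Finset.sum_eq_zero_iff_of_nonneg h1).mp h i (Finset.mem_univ i)
      have h3 : ∀ j ∈ Finset.univ, (0:ℝ) ≤ Complex.normSq ((x : Matrix n n ℂ) i j) :=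
        fun j _ => Complex.normSq_nonneg _
      exact (Finset.sum_eq_zero_iff_of_nonneg h3).mp h2 j (Finset.mem_univ j)
    apply Subtype.ext
    ext i j
    simpa [Complex.normSq_eq_zero] using (Complex.normSq_eq_zero).mp (hz i j)

open scoped RealInnerProductSpace MatrixOrder in
/-- Uniqueness of positive self-adjoint square roots of endomorphisms of a real
inner product space. -/
lemma sym_pos_sq_unique {V : Type*} [NormedAddCommGroup V] [InnerProductSpace ℝ V]
    [FiniteDimensional ℝ V] (f g : V →ₗ[ℝ] V)
    (hfs : ∀ x y, ⟪f x, y⟫ = ⟪x, f y⟫) (hgs : ∀ x y, ⟪g x, y⟫ = ⟪x, g y⟫)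
    (hfp : ∀ x, 0 ≤ ⟪x, f x⟫) (hgp : ∀ x, 0 ≤ ⟪x, g x⟫)
    (h : f ∘ₗ f = g ∘ₗ g) : f = g := by
  classical
  have e := stdOrthonormalBasis ℝ V
  set b := e.toBasis with hb
  have entry : ∀ (h : V →ₗ[ℝ] V) i j, LinearMap.toMatrix b b h i j = ⟪e i, h (e j)⟫ := by
    intro h i j
    rw [LinearMap.toMatrix_apply, hb, OrthonormalBasis.coe_toBasis_repr_apply,
      OrthonormalBasis.repr_apply_apply, OrthonormalBasis.coe_toBasis]
  have key : ∀ (h : V →ₗ[ℝ] V), (∀ x y, ⟪h x, y⟫ = ⟪x, h y⟫) → (∀ x, 0 ≤ ⟪x, h x⟫) →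
      (LinearMap.toMatrix b b h).PosSemidef := by
    intro h hs hp
    rw [Matrix.posSemidef_iff_dotProduct_mulVec]
    constructor
    · ext i j
      rw [Matrix.conjTranspose_apply, entry, entry, star_trivial, ← hs,
        real_inner_comm]
    · intro v
      have hv : ∀ i j, star v i * LinearMap.toMatrix b b h i j * v j
          = ⟪v i • e i, h (v j • e j)⟫ := by
        intro i j
        rw [entry, LinearMap.map_smul, real_inner_smul_left, real_inner_smul_right, star_trivial]
        ring
      have step : star v ⬝ᵥ (LinearMap.toMatrix b b h) *ᵥ v
          = ∑ i, ∑ j, star v i * LinearMap.toMatrix b b h i j * v j := by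
        simp [dotProduct, Matrix.mulVec, Finset.mul_sum, mul_assoc]
      rw [step]
      have step2 : ∑ i, ∑ j, star v i * LinearMap.toMatrix b b h i j * v j
          = ⟪∑ i, v i • e i, h (∑ j, v j • e j)⟫ := by
        rw [map_sum h, sum_inner]
        refine Finset.sum_congr rfl fun i _ => ?_
        rw [inner_sum]
        exact Finset.sum_congr rfl fun j _ => hv i j
      rw [step2]
      exact hp _
  have hF := key f hfs hfp
  have hG := key g hgs hgp
  have hsq : (LinearMap.toMatrix b b f) ^ 2 = (LinearMap.toMatrix b b g) ^ 2 := by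
    rw [pow_two, pow_two, ← LinearMap.toMatrix_comp, ← LinearMap.toMatrix_comp, h]
  have := (CFC.sqrt_unique (a := (LinearMap.toMatrix b b g) ^ 2) (by rw [← hsq, sq])
    hF.nonneg).symm.trans (CFC.sqrt_unique (by rw [sq]) hG.nonneg)
  exact (LinearMap.toMatrix b b).injective this

lemma exists_herm_basis {ι n : Type*} [Fintype ι] [Fintype n] [DecidableEq n]
    (L : ι → Matrix n n ℂ) (hherm : ∀ i, (L i).IsHermitian) (hli : LinearIndependent ℝ L)
    (T : Matrix n n ℂ → Matrix n n ℂ) (hT : IsInvSqrtOfFrameOp L T) :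
    ∃ b : Module.Basis ι ℝ (HermM n), ∀ i, (b i : Matrix n n ℂ) = L i := by
  classical
  set Lhat : ι → HermM n := fun i => ⟨L i, hherm i⟩ with hLhat
  have hli' : LinearIndependent ℝ Lhat := by
    apply LinearIndependent.of_comp (HermM n).subtype
    exact hli
  have hspan : ⊤ ≤ Submodule.span ℝ (Set.range Lhat) := by
    rintro ⟨X, hX⟩ -
    have hX' : X.IsHermitian := hX
    set Y := T (T X) with hY
    have hYh : Y.IsHermitian := hT.1.2.1 _ (hT.1.2.1 _ hX')
    have hX2 : rsFrameOp L Y = X := hT.2 X hX'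
    set c : ι → ℝ := fun j => (((Y * L j).trace) / ((L j).trace)).re with hc
    have hcoef : ∀ j, ((Y * L j).trace) / ((L j).trace) = ((c j : ℝ) : ℂ) := by
      intro j
      have h1 := herm_mul_trace_re hYh (hherm j)
      have h2 := herm_trace_re (hherm j)
      show (Y * L j).trace / (L j).trace = ((((Y * L j).trace / (L j).trace).re : ℝ) : ℂ)
      conv_lhs => rw [h1, h2]
      conv_rhs => rw [h1, h2]
      rw [← Complex.ofReal_div, Complex.ofReal_re]
    have hxe : (⟨X, hX⟩ : HermM n) = ∑ j, c j • Lhat j := by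
      apply Subtype.ext
      have hco : ((∑ j, c j • Lhat j : HermM n) : Matrix n n ℂ) = ∑ j, (c j : ℝ) • L j := by
        push_cast
        rfl
      rw [hco]
      show X = _
      rw [← hX2]
      unfold rsFrameOp
      refine (Finset.sum_congr rfl fun j _ => ?_).symm
      rw [hcoef j, real_smul_matC]
    rw [hxe]
    exact Submodule.sum_mem _ fun j _ => Submodule.smul_mem _ _
      (Submodule.subset_span ⟨j, rfl⟩)
  refine ⟨Module.Basis.mk hli' hspan, fun i => ?_⟩
  rw [Module.Basis.mk_apply]

lemma herm_linIndep_complex {ι n : Type*} [Fintype ι] [Fintype n]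
    {L : ι → Matrix n n ℂ} (hherm : ∀ i, (L i).IsHermitian)
    (hli : LinearIndependent ℝ L) : LinearIndependent ℂ L := by
  rw [Fintype.linearIndependent_iff] at hli ⊢
  intro c h
  have h' : ∀ x y, ∑ i, c i * L i x y = 0 := by
    intro x y
    have := congrFun (congrFun h x) y
    simpa [Matrix.sum_apply, Matrix.smul_apply] using this
  set H : Matrix n n ℂ := ∑ i, (c i).re • L i with hH
  set K : Matrix n n ℂ := ∑ i, (c i).im • L i with hK
  have hHK : H + Complex.I • K = 0 := by
    ext x y
    simp only [Matrix.add_apply, Matrix.smul_apply, Matrix.sum_apply, Matrix.zero_apply, hH, hK,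
      smul_eq_mul, Complex.real_smul]
    rw [Finset.mul_sum, ← Finset.sum_add_distrib]
    rw [← h' x y]
    refine Finset.sum_congr rfl fun i _ => ?_
    rw [← Complex.re_add_im (c i)]
    ring_nf
    simp [Complex.re_add_im]
    ring
  have hsumherm : ∀ (r : ι → ℝ), (∑ i, r i • L i : Matrix n n ℂ).IsHermitian := by
    intro r
    unfold Matrix.IsHermitian
    rw [Matrix.conjTranspose_sum]
    refine Finset.sum_congr rfl fun i _ => ?_
    rw [real_smul_matC, Matrix.conjTranspose_smul, (hherm i).eq]
    simp
  have hHh : H.IsHermitian := hsumherm _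
  have hKh : K.IsHermitian := hsumherm _
  have hHK2 : H - Complex.I • K = 0 := by
    have := congrArg Matrix.conjTranspose hHK
    rw [Matrix.conjTranspose_add, Matrix.conjTranspose_smul, hHh.eq, hKh.eq] at this
    simpa [Complex.star_def, Complex.conj_I, neg_smul, sub_eq_add_neg] using this
  have hHzero : H = 0 := by
    have hsum2 := congrArg₂ (· + ·) hHK hHK2
    simp only [add_zero] at hsum2
    have h2 : H + H = 0 := by
      rw [← hsum2]
      abel
    have h3 : (2:ℝ) • H = 0 := by rw [two_smul]; exact h2
    rcases smul_eq_zero.mp h3 with h4 | h4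
    · norm_num at h4
    · exact h4
  have hKzero : K = 0 := by
    have hIK : Complex.I • K = 0 := by
      have := hHK
      rw [hHzero, zero_add] at this
      exact this
    have := congrArg (fun M => (Complex.I)⁻¹ • M) hIK
    simpa [smul_smul, Complex.I_ne_zero] using this
  intro i
  exact Complex.ext (hli _ hHzero i) (hli _ hKzero i)

lemma kron_linIndep {ι κ m n : Type*} [Fintype ι] [Fintype κ] [Fintype m] [Fintype n]
    {D : ι → Matrix m m ℂ} {E : κ → Matrix n n ℂ}
    (hermD : ∀ i, (D i).IsHermitian)
    (hliD : LinearIndependent ℝ D) (hliE : LinearIndependent ℝ E) :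
    LinearIndependent ℝ (fun p : ι × κ => D p.1 ⊗ₖ E p.2) := by
  have hliDC := herm_linIndep_complex hermD hliD
  rw [Fintype.linearIndependent_iff] at hliDC hliE ⊢
  intro c h
  have h' : ∀ a b x y, ∑ p : ι × κ, (c p : ℂ) * (D p.1 a x * E p.2 b y) = 0 := by
    intro a b x y
    have := congrFun (congrFun h (a, b)) (x, y)
    simpa [Matrix.sum_apply, Matrix.smul_apply, Matrix.kroneckerMap_apply,
      Complex.real_smul] using this
  have hz : ∀ (b y : n) (i : ι), ∑ j, (c (i, j) : ℂ) * E j b y = 0 := by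
    intro b y
    have hsum : ∑ i, (∑ j, (c (i, j) : ℂ) * E j b y) • D i = 0 := by
      ext a x
      simp only [Matrix.sum_apply, Matrix.smul_apply, Matrix.zero_apply, smul_eq_mul]
      rw [← h' a b x y, ← Finset.univ_product_univ, Finset.sum_product]
      refine Finset.sum_congr rfl fun i _ => ?_
      rw [Finset.sum_mul]
      refine Finset.sum_congr rfl fun j _ => ?_
      ring
    exact hliDC _ hsum
  rintro ⟨i, j⟩
  have hEz : ∑ j, c (i, j) • E j = 0 := by
    ext b y
    have := hz b y i
    simpa [Matrix.sum_apply, Matrix.smul_apply, Complex.real_smul] using this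
  exact hliE _ hEz j


lemma sum_real_smul_herm {ι n : Type*} [Fintype ι] [Fintype n]
    {L : ι → Matrix n n ℂ} (hherm : ∀ i, (L i).IsHermitian) (r : ι → ℝ) :
    (∑ i, r i • L i : Matrix n n ℂ).IsHermitian := by
  unfold Matrix.IsHermitian
  rw [Matrix.conjTranspose_sum]
  refine Finset.sum_congr rfl fun i _ => ?_
  rw [real_smul_matC, Matrix.conjTranspose_smul, (hherm i).eq]
  simp

lemma rsFrameOp_isHermitian {ι n : Type*} [Fintype ι] [Fintype n] [DecidableEq n]
    {L : ι → Matrix n n ℂ} (hherm : ∀ i, (L i).IsHermitian) {X : Matrix n n ℂ}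
    (hX : X.IsHermitian) : (rsFrameOp L X).IsHermitian := by
  unfold rsFrameOp Matrix.IsHermitian
  rw [Matrix.conjTranspose_sum]
  refine Finset.sum_congr rfl fun j _ => ?_
  rw [Matrix.conjTranspose_smul, (hherm j).eq]
  congr 1
  have h1 := herm_mul_trace_re hX (hherm j)
  have h2 := herm_trace_re (hherm j)
  conv_lhs => rw [h1, h2, ← Complex.ofReal_div]
  conv_rhs => rw [h1, h2, ← Complex.ofReal_div]
  rw [Complex.star_def, Complex.conj_ofReal]

lemma rsFrameOp_add {ι n : Type*} [Fintype ι] [Fintype n] [DecidableEq n]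
    (L : ι → Matrix n n ℂ) (X Y : Matrix n n ℂ) :
    rsFrameOp L (X + Y) = rsFrameOp L X + rsFrameOp L Y := by
  unfold rsFrameOp
  rw [← Finset.sum_add_distrib]
  refine Finset.sum_congr rfl fun j _ => ?_
  rw [Matrix.add_mul, Matrix.trace_add, add_div, add_smul]

lemma rsFrameOp_smul {ι n : Type*} [Fintype ι] [Fintype n] [DecidableEq n]
    (L : ι → Matrix n n ℂ) (r : ℝ) (X : Matrix n n ℂ) :
    rsFrameOp L (r • X) = r • rsFrameOp L X := by
  unfold rsFrameOp
  rw [Finset.smul_sum]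
  refine Finset.sum_congr rfl fun j _ => ?_
  rw [Matrix.smul_mul, Matrix.trace_smul, smul_div_assoc, smul_assoc]

lemma gram_like_posSemidef {ι n : Type*} [Fintype ι] [Fintype n]
    (L : ι → Matrix n n ℂ) (hherm : ∀ i, (L i).IsHermitian)
    (T : Matrix n n ℂ → Matrix n n ℂ) (hlin : IsLinearMap ℝ T)
    (hsym : ∀ X Y, X.IsHermitian → Y.IsHermitian → (T X * Y).trace = (X * T Y).trace)
    (hpos : ∀ X, X.IsHermitian → 0 ≤ ((X * T X).trace).re) :
    Matrix.PosSemidef (Matrix.of fun i k => ((L i * T (L k)).trace).re) := by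
  rw [Matrix.posSemidef_iff_dotProduct_mulVec]
  constructor
  · ext i k
    rw [Matrix.conjTranspose_apply, star_trivial]
    show ((L k * T (L i)).trace).re = ((L i * T (L k)).trace).re
    rw [Matrix.trace_mul_comm (L k) (T (L i)), hsym (L i) (L k) (hherm i) (hherm k)]
  · intro v
    set t : Matrix n n ℂ →ₗ[ℝ] Matrix n n ℂ := IsLinearMap.mk' T hlin with ht
    set X : Matrix n n ℂ := ∑ i, v i • L i with hX
    have hXh : X.IsHermitian := sum_real_smul_herm hherm v
    have hTX : T X = ∑ k, v k • T (L k) := by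
      show t X = _
      rw [hX, map_sum]
      exact Finset.sum_congr rfl fun k _ => map_smul t _ _
    have htr : (X * T X).trace
        = ∑ i, ∑ k, ((v i : ℂ) * (v k : ℂ)) * (L i * T (L k)).trace := by
      rw [hTX, hX, Matrix.sum_mul, Matrix.trace_sum]
      refine Finset.sum_congr rfl fun i _ => ?_
      rw [Matrix.mul_sum, Matrix.trace_sum]
      refine Finset.sum_congr rfl fun k _ => ?_
      rw [Matrix.smul_mul, Matrix.mul_smul, Matrix.trace_smul, Matrix.trace_smul, smul_smul,
        Complex.real_smul, Complex.ofReal_mul]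
    have hre : ((X * T X).trace).re = ∑ i, ∑ k, v i * v k * ((L i * T (L k)).trace).re := by
      rw [htr, Complex.re_sum]
      refine Finset.sum_congr rfl fun i _ => ?_
      rw [Complex.re_sum]
      refine Finset.sum_congr rfl fun k _ => ?_
      rw [← Complex.ofReal_mul, Complex.mul_re, Complex.ofReal_re, Complex.ofReal_im]
      ring
    have hdot : star v ⬝ᵥ ((Matrix.of fun i k => ((L i * T (L k)).trace).re) *ᵥ v)
        = ∑ i, ∑ k, v i * v k * ((L i * T (L k)).trace).re := by
      simp only [dotProduct, Matrix.mulVec, Pi.star_apply, star_trivial, Matrix.of_apply,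
        Finset.mul_sum]
      refine Finset.sum_congr rfl fun i _ => Finset.sum_congr rfl fun k _ => ?_
      ring
    rw [hdot, ← hre]
    exact hpos X hXh

lemma re_mul_of_real {z w : ℂ} (hz : z = (z.re : ℂ)) (hw : w = (w.re : ℂ)) :
    (z * w).re = z.re * w.re := by
  conv_lhs => rw [hz, hw]
  rw [← Complex.ofReal_mul, Complex.ofReal_re]

end AuxiliaryLemmas

/-- elementwise Kronecker products of two measure bases form a measure
basis for the product dimension, with multiplicative weights, Kronecker-product Gram
matrix (hence Kronecker-product Born matrix), and `PW(D⊗E) = PW(D) ⊗ PW(E)`. If `D` and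
`E` are MICs then so is `D⊗E`. -/
theorem principal_wigner_tensor_product {d₁ d₂ : ℕ} [NeZero d₁] [NeZero d₂]
    (D : Fin (d₁ ^ 2) → Matrix (Fin d₁) (Fin d₁) ℂ)
    (E : Fin (d₂ ^ 2) → Matrix (Fin d₂) (Fin d₂) ℂ)
    (hD : IsMeasureBasis D) (hE : IsMeasureBasis E)
    (hDpos : ∀ i, 0 < ((D i).trace).re) (hEpos : ∀ j, 0 < ((E j).trace).re)
    (M : Fin (d₁ ^ 2) × Fin (d₂ ^ 2) → Matrix (Fin d₁ × Fin d₂) (Fin d₁ × Fin d₂) ℂ)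
    (hM : ∀ p, M p = D p.1 ⊗ₖ E p.2)
    (G₁ : Matrix (Fin (d₁ ^ 2)) (Fin (d₁ ^ 2)) ℝ)
    (hG₁ : ∀ i k, G₁ i k = ((D i * D k).trace).re)
    (G₂ : Matrix (Fin (d₂ ^ 2)) (Fin (d₂ ^ 2)) ℝ)
    (hG₂ : ∀ j l, G₂ j l = ((E j * E l).trace).re)
    (Gp : Matrix (Fin (d₁ ^ 2) × Fin (d₂ ^ 2)) (Fin (d₁ ^ 2) × Fin (d₂ ^ 2)) ℝ)
    (hGp : ∀ p q, Gp p q = ((M p * M q).trace).re)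
    (A₁ : Matrix (Fin (d₁ ^ 2)) (Fin (d₁ ^ 2)) ℝ)
    (hA₁ : A₁ = Matrix.diagonal fun i => ((D i).trace).re)
    (A₂ : Matrix (Fin (d₂ ^ 2)) (Fin (d₂ ^ 2)) ℝ)
    (hA₂ : A₂ = Matrix.diagonal fun j => ((E j).trace).re)
    (Ap : Matrix (Fin (d₁ ^ 2) × Fin (d₂ ^ 2)) (Fin (d₁ ^ 2) × Fin (d₂ ^ 2)) ℝ)
    (hAp : Ap = Matrix.diagonal fun p => ((M p).trace).re)
    (T₁ : Matrix (Fin d₁) (Fin d₁) ℂ → Matrix (Fin d₁) (Fin d₁) ℂ)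
    (hT₁ : IsInvSqrtOfFrameOp D T₁)
    (T₂ : Matrix (Fin d₂) (Fin d₂) ℂ → Matrix (Fin d₂) (Fin d₂) ℂ)
    (hT₂ : IsInvSqrtOfFrameOp E T₂)
    (Tp : Matrix (Fin d₁ × Fin d₂) (Fin d₁ × Fin d₂) ℂ →
          Matrix (Fin d₁ × Fin d₂) (Fin d₁ × Fin d₂) ℂ)
    (hTp : IsInvSqrtOfFrameOp M Tp) :
    (∀ p, (M p).IsHermitian) ∧
    LinearIndependent ℝ M ∧
    (∑ p, M p) = 1 ∧
    (∀ p, (M p).trace = (D p.1).trace * (E p.2).trace) ∧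
    Gp = G₁ ⊗ₖ G₂ ∧
    Ap * Gp⁻¹ = (A₁ * G₁⁻¹) ⊗ₖ (A₂ * G₂⁻¹) ∧
    (∀ p, Tp (M p) = (T₁ (D p.1)) ⊗ₖ (T₂ (E p.2))) ∧
    ((∀ i, (D i).PosSemidef) → (∀ j, (E j).PosSemidef) → ∀ p, (M p).PosSemidef) := by
  classical
  obtain ⟨hermD, liD, sumD, -⟩ := hD
  obtain ⟨hermE, liE, sumE, -⟩ := hE
  have hermM : ∀ p, (M p).IsHermitian := fun p => by
    rw [hM p]; exact kron_isHermitian (hermD p.1) (hermE p.2)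
  have liM : LinearIndependent ℝ M := by
    have h := kron_linIndep hermD liD liE
    have hfun : M = fun p : Fin (d₁ ^ 2) × Fin (d₂ ^ 2) => D p.1 ⊗ₖ E p.2 := funext hM
    rw [hfun]; exact h
  have sumM : (∑ p, M p) = 1 := by
    have h1 : ∑ p : Fin (d₁ ^ 2) × Fin (d₂ ^ 2), M p = (∑ i, D i) ⊗ₖ (∑ j, E j) := by
      have h2 := sum_smul_kronC (fun _ => (1:ℂ)) D (fun _ => (1:ℂ)) E
      simp only [one_smul, one_mul] at h2
      rw [h2]
      exact Finset.sum_congr rfl fun p _ => hM p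
    rw [h1, sumD, sumE, Matrix.one_kronecker_one]
  have trM : ∀ p, (M p).trace = (D p.1).trace * (E p.2).trace := fun p => by
    rw [hM p, Matrix.trace_kronecker]
  have GpEq : Gp = G₁ ⊗ₖ G₂ := by
    ext ⟨i, j⟩ ⟨k, l⟩
    rw [hGp, Matrix.kroneckerMap_apply, hG₁, hG₂, hM, hM, ← Matrix.mul_kronecker_mul,
      Matrix.trace_kronecker]
    exact re_mul_of_real (herm_mul_trace_re (hermD i) (hermD k))
      (herm_mul_trace_re (hermE j) (hermE l))
  have bornEq : Ap * Gp⁻¹ = (A₁ * G₁⁻¹) ⊗ₖ (A₂ * G₂⁻¹) := by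
    have ApEq : Ap = A₁ ⊗ₖ A₂ := by
      have hdg : (fun p : Fin (d₁ ^ 2) × Fin (d₂ ^ 2) => (M p).trace.re)
          = fun p => (D p.1).trace.re * (E p.2).trace.re := by
        funext p
        rw [trM p]
        exact re_mul_of_real (herm_trace_re (hermD p.1)) (herm_trace_re (hermE p.2))
      rw [hAp, hdg, hA₁, hA₂, Matrix.diagonal_kronecker_diagonal]
    rw [ApEq, GpEq, Matrix.inv_kronecker, ← Matrix.mul_kronecker_mul]
  have pw : ∀ p, Tp (M p) = (T₁ (D p.1)) ⊗ₖ (T₂ (E p.2)) := by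
    obtain ⟨bD, hbD⟩ := exists_herm_basis D hermD liD T₁ hT₁
    obtain ⟨bE, hbE⟩ := exists_herm_basis E hermE liE T₂ hT₂
    obtain ⟨bM, hbM⟩ := exists_herm_basis M hermM liM Tp hTp
    letI : NormedAddCommGroup (HermM (Fin d₁ × Fin d₂)) :=
      (hermCore (Fin d₁ × Fin d₂)).toNormedAddCommGroup
    letI : InnerProductSpace ℝ (HermM (Fin d₁ × Fin d₂)) :=
      InnerProductSpace.ofCore (hermCore (Fin d₁ × Fin d₂)).toCore
    have inner_def : ∀ x y : HermM (Fin d₁ × Fin d₂),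
        (inner ℝ x y : ℝ) = ((x.1 * y.1).trace).re :=
      fun _ _ => rfl
    set f : HermM (Fin d₁ × Fin d₂) →ₗ[ℝ] HermM (Fin d₁ × Fin d₂) :=
      { toFun := fun x => ⟨Tp x.1, hTp.1.2.1 _ x.2⟩
        map_add' := fun x y => Subtype.ext (hTp.1.1.map_add x.1 y.1)
        map_smul' := fun r x => Subtype.ext (hTp.1.1.map_smul r x.1) } with hf
    set W : Fin (d₁ ^ 2) × Fin (d₂ ^ 2) → HermM (Fin d₁ × Fin d₂) := fun p =>
      ⟨(T₁ (D p.1)) ⊗ₖ (T₂ (E p.2)),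
        kron_isHermitian (hT₁.1.2.1 _ (hermD p.1)) (hT₂.1.2.1 _ (hermE p.2))⟩ with hWdef
    set g : HermM (Fin d₁ × Fin d₂) →ₗ[ℝ] HermM (Fin d₁ × Fin d₂) := bM.constr ℝ W with hg
    set Sop : HermM (Fin d₁ × Fin d₂) →ₗ[ℝ] HermM (Fin d₁ × Fin d₂) :=
      { toFun := fun x => ⟨rsFrameOp M x.1, rsFrameOp_isHermitian hermM x.2⟩
        map_add' := fun x y => Subtype.ext (rsFrameOp_add M x.1 y.1)
        map_smul' := fun r x => Subtype.ext (rsFrameOp_smul M r x.1) } with hSop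
    have hfs : ∀ x y : HermM (Fin d₁ × Fin d₂), (inner ℝ (f x) y : ℝ) = inner ℝ x (f y) := by
      intro x y
      rw [inner_def, inner_def]
      have : (f x).1 = Tp x.1 := rfl
      rw [this, show (f y).1 = Tp y.1 from rfl]
      rw [hTp.1.2.2.1 x.1 y.1 x.2 y.2]
    have hfp : ∀ x : HermM (Fin d₁ × Fin d₂), (0:ℝ) ≤ inner ℝ x (f x) := by
      intro x
      rw [inner_def]
      exact hTp.1.2.2.2 x.1 x.2
    have hSf : Sop.comp (f.comp f) = LinearMap.id := by
      apply LinearMap.ext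
      intro x
      exact Subtype.ext (hTp.2 x.1 x.2)
    have hInj : Function.Injective Sop := by
      rw [LinearMap.injective_iff_surjective]
      intro y
      exact ⟨f (f y), congrArg (fun h => h y) hSf⟩
    have coe_expandD : ∀ x : HermM (Fin d₁),
        (x : Matrix (Fin d₁) (Fin d₁) ℂ) = ∑ i, bD.repr x i • D i := by
      intro x
      conv_lhs => rw [← bD.sum_repr x]
      push_cast
      exact Finset.sum_congr rfl fun i _ => by rw [hbD i]
    have coe_expandE : ∀ y : HermM (Fin d₂),
        (y : Matrix (Fin d₂) (Fin d₂) ℂ) = ∑ j, bE.repr y j • E j := by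
      intro y
      conv_lhs => rw [← bE.sum_repr y]
      push_cast
      exact Finset.sum_congr rfl fun j _ => by rw [hbE j]
    set t₁ : Matrix (Fin d₁) (Fin d₁) ℂ →ₗ[ℝ] Matrix (Fin d₁) (Fin d₁) ℂ :=
      IsLinearMap.mk' T₁ hT₁.1.1 with ht₁
    set t₂ : Matrix (Fin d₂) (Fin d₂) ℂ →ₗ[ℝ] Matrix (Fin d₂) (Fin d₂) ℂ :=
      IsLinearMap.mk' T₂ hT₂.1.1 with ht₂
    have gkron : ∀ (x : HermM (Fin d₁)) (y : HermM (Fin d₂)) (z : HermM (Fin d₁ × Fin d₂)),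
        (z : Matrix (Fin d₁ × Fin d₂) (Fin d₁ × Fin d₂) ℂ)
          = (x : Matrix (Fin d₁) (Fin d₁) ℂ) ⊗ₖ (y : Matrix (Fin d₂) (Fin d₂) ℂ) →
        ((g z : HermM (Fin d₁ × Fin d₂)) : Matrix (Fin d₁ × Fin d₂) (Fin d₁ × Fin d₂) ℂ)
          = (T₁ x.1) ⊗ₖ (T₂ y.1) := by
      intro x y z hz
      have hzd : z = ∑ p : Fin (d₁ ^ 2) × Fin (d₂ ^ 2),
          (bD.repr x p.1 * bE.repr y p.2) • bM p := by
        apply Subtype.ext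
        rw [hz]
        push_cast
        rw [coe_expandD x, coe_expandE y]
        have hsm : ∀ i : Fin (d₁ ^ 2), bD.repr x i • D i = (bD.repr x i : ℂ) • D i :=
          fun i => real_smul_matC _ _
        have hsm' : ∀ j : Fin (d₂ ^ 2), bE.repr y j • E j = (bE.repr y j : ℂ) • E j :=
          fun j => real_smul_matC _ _
        rw [Finset.sum_congr rfl fun i _ => hsm i, Finset.sum_congr rfl fun j _ => hsm' j,
          sum_smul_kronC]
        refine Finset.sum_congr rfl fun p _ => ?_
        rw [hbM p, hM p, real_smul_matC, Complex.ofReal_mul]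
      rw [hzd, map_sum]
      have hterm : ∀ p : Fin (d₁ ^ 2) × Fin (d₂ ^ 2),
          g ((bD.repr x p.1 * bE.repr y p.2) • bM p)
            = (bD.repr x p.1 * bE.repr y p.2) • W p := by
        intro p
        rw [LinearMap.map_smul, hg, Module.Basis.constr_basis]
      rw [Finset.sum_congr rfl fun p _ => hterm p]
      push_cast
      have hT1x : T₁ x.1 = ∑ i, bD.repr x i • T₁ (D i) := by
        have hx : x.1 = ∑ i, bD.repr x i • D i := coe_expandD x
        show t₁ x.1 = ∑ i, bD.repr x i • t₁ (D i)
        rw [hx, map_sum]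
        exact Finset.sum_congr rfl fun i _ => map_smul t₁ _ _
      have hT2y : T₂ y.1 = ∑ j, bE.repr y j • T₂ (E j) := by
        have hy : y.1 = ∑ j, bE.repr y j • E j := coe_expandE y
        show t₂ y.1 = ∑ j, bE.repr y j • t₂ (E j)
        rw [hy, map_sum]
        exact Finset.sum_congr rfl fun j _ => map_smul t₂ _ _
      rw [hT1x, hT2y]
      have hsm : ∀ i : Fin (d₁ ^ 2), bD.repr x i • T₁ (D i) = (bD.repr x i : ℂ) • T₁ (D i) :=
        fun i => real_smul_matC _ _
      have hsm' : ∀ j : Fin (d₂ ^ 2), bE.repr y j • T₂ (E j) = (bE.repr y j : ℂ) • T₂ (E j) :=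
        fun j => real_smul_matC _ _
      rw [Finset.sum_congr rfl fun i _ => hsm i, Finset.sum_congr rfl fun j _ => hsm' j,
        sum_smul_kronC]
      refine Finset.sum_congr rfl fun p _ => ?_
      rw [real_smul_matC, Complex.ofReal_mul]
    have frame_factor : ∀ (A : Matrix (Fin d₁) (Fin d₁) ℂ) (B : Matrix (Fin d₂) (Fin d₂) ℂ),
        rsFrameOp M (A ⊗ₖ B) = (rsFrameOp D A) ⊗ₖ (rsFrameOp E B) := by
      intro A B
      unfold rsFrameOp
      rw [sum_smul_kronC]
      refine Finset.sum_congr rfl fun q _ => ?_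
      rw [hM q, ← Matrix.mul_kronecker_mul, Matrix.trace_kronecker, Matrix.trace_kronecker,
        div_mul_div_comm]
    have hSg : Sop.comp (g.comp g) = LinearMap.id := by
      apply Module.Basis.ext bM
      intro p
      have h1 : g (bM p) = W p := by rw [hg]; exact bM.constr_basis ℝ W p
      have h2 : ((g (W p) : HermM (Fin d₁ × Fin d₂))
            : Matrix (Fin d₁ × Fin d₂) (Fin d₁ × Fin d₂) ℂ)
          = T₁ (T₁ (D p.1)) ⊗ₖ T₂ (T₂ (E p.2)) :=
        gkron ⟨T₁ (D p.1), hT₁.1.2.1 _ (hermD p.1)⟩ ⟨T₂ (E p.2), hT₂.1.2.1 _ (hermE p.2)⟩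
          (W p) rfl
      have h3 : g (g (bM p)) = g (W p) := congrArg g h1
      apply Subtype.ext
      show rsFrameOp M ((g (g (bM p))).1) = (bM p).1
      rw [h3, h2, frame_factor, hT₁.2 (D p.1) (hermD p.1), hT₂.2 (E p.2) (hermE p.2), hbM p,
        hM p]
    have hffgg : f.comp f = g.comp g := by
      apply LinearMap.ext
      intro x
      apply hInj
      have e1 : Sop ((f.comp f) x) = x := congrArg (fun h => h x) hSf
      have e2 : Sop ((g.comp g) x) = x := congrArg (fun h => h x) hSg
      show Sop ((f.comp f) x) = Sop ((g.comp g) x)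
      rw [e1, e2]
    have expandL : ∀ (h : HermM (Fin d₁ × Fin d₂) →ₗ[ℝ] HermM (Fin d₁ × Fin d₂))
        (x y : HermM (Fin d₁ × Fin d₂)),
        (inner ℝ (h x) y : ℝ)
          = ∑ p, ∑ q, bM.repr x p * bM.repr y q * inner ℝ (h (bM p)) (bM q) := by
      intro h x y
      conv_lhs => rw [← bM.sum_repr x, ← bM.sum_repr y]
      rw [map_sum, sum_inner]
      refine Finset.sum_congr rfl fun p _ => ?_
      rw [LinearMap.map_smul, real_inner_smul_left, inner_sum, Finset.mul_sum]
      refine Finset.sum_congr rfl fun q _ => ?_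
      rw [real_inner_smul_right]
      ring
    have expandR : ∀ (h : HermM (Fin d₁ × Fin d₂) →ₗ[ℝ] HermM (Fin d₁ × Fin d₂))
        (x y : HermM (Fin d₁ × Fin d₂)),
        (inner ℝ x (h y) : ℝ)
          = ∑ p, ∑ q, bM.repr x p * bM.repr y q * inner ℝ (bM p) (h (bM q)) := by
      intro h x y
      conv_lhs => rw [← bM.sum_repr x, ← bM.sum_repr y]
      rw [map_sum, sum_inner]
      refine Finset.sum_congr rfl fun p _ => ?_
      rw [real_inner_smul_left, inner_sum, Finset.mul_sum]
      refine Finset.sum_congr rfl fun q _ => ?_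
      rw [LinearMap.map_smul, real_inner_smul_right]
      ring
    have hgbM : ∀ p, g (bM p) = W p := by
      intro p
      rw [hg]
      exact bM.constr_basis ℝ W p
    have gbase : ∀ p q, (inner ℝ (g (bM p)) (bM q) : ℝ) = inner ℝ (bM p) (g (bM q)) := by
      intro p q
      rw [hgbM p, hgbM q, inner_def, inner_def]
      have hWp : ((W p : HermM (Fin d₁ × Fin d₂))
          : Matrix (Fin d₁ × Fin d₂) (Fin d₁ × Fin d₂) ℂ) = T₁ (D p.1) ⊗ₖ T₂ (E p.2) := rfl
      have hWq : ((W q : HermM (Fin d₁ × Fin d₂))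
          : Matrix (Fin d₁ × Fin d₂) (Fin d₁ × Fin d₂) ℂ) = T₁ (D q.1) ⊗ₖ T₂ (E q.2) := rfl
      rw [hWp, hWq, hbM p, hbM q, hM p, hM q, ← Matrix.mul_kronecker_mul,
        ← Matrix.mul_kronecker_mul, Matrix.trace_kronecker, Matrix.trace_kronecker]
      rw [re_mul_of_real (herm_mul_trace_re (hT₁.1.2.1 _ (hermD p.1)) (hermD q.1))
          (herm_mul_trace_re (hT₂.1.2.1 _ (hermE p.2)) (hermE q.2)),
        re_mul_of_real (herm_mul_trace_re (hermD p.1) (hT₁.1.2.1 _ (hermD q.1)))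
          (herm_mul_trace_re (hermE p.2) (hT₂.1.2.1 _ (hermE q.2)))]
      rw [hT₁.1.2.2.1 (D p.1) (D q.1) (hermD p.1) (hermD q.1),
        hT₂.1.2.2.1 (E p.2) (E q.2) (hermE p.2) (hermE q.2)]
    have hgs : ∀ x y : HermM (Fin d₁ × Fin d₂), (inner ℝ (g x) y : ℝ) = inner ℝ x (g y) := by
      intro x y
      rw [expandL g x y, expandR g x y]
      exact Finset.sum_congr rfl fun p _ => Finset.sum_congr rfl fun q _ => by
        rw [gbase p q]
    have hgp : ∀ x : HermM (Fin d₁ × Fin d₂), (0:ℝ) ≤ inner ℝ x (g x) := by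
      intro x
      set K₁ : Matrix (Fin (d₁ ^ 2)) (Fin (d₁ ^ 2)) ℝ :=
        Matrix.of fun i k => ((D i * T₁ (D k)).trace).re with hK₁
      set K₂ : Matrix (Fin (d₂ ^ 2)) (Fin (d₂ ^ 2)) ℝ :=
        Matrix.of fun j l => ((E j * T₂ (E l)).trace).re with hK₂
      have hK₁psd : K₁.PosSemidef :=
        gram_like_posSemidef D hermD T₁ hT₁.1.1 hT₁.1.2.2.1 hT₁.1.2.2.2
      have hK₂psd : K₂.PosSemidef :=
        gram_like_posSemidef E hermE T₂ hT₂.1.1 hT₂.1.2.2.1 hT₂.1.2.2.2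
      have hKpsd : (K₁ ⊗ₖ K₂).PosSemidef := kron_posSemidef hK₁psd hK₂psd
      have hbase : ∀ p q, (inner ℝ (bM p) (g (bM q)) : ℝ) = (K₁ ⊗ₖ K₂) p q := by
        intro p q
        rw [hgbM q, inner_def]
        have hWq : ((W q : HermM (Fin d₁ × Fin d₂))
            : Matrix (Fin d₁ × Fin d₂) (Fin d₁ × Fin d₂) ℂ) = T₁ (D q.1) ⊗ₖ T₂ (E q.2) := rfl
        rw [hWq, hbM p, hM p, ← Matrix.mul_kronecker_mul, Matrix.trace_kronecker]
        have := re_mul_of_real (herm_mul_trace_re (hermD p.1) (hT₁.1.2.1 _ (hermD q.1)))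
          (herm_mul_trace_re (hermE p.2) (hT₂.1.2.1 _ (hermE q.2)))
        rw [this]
        show _ = (K₁ ⊗ₖ K₂) (p.1, p.2) (q.1, q.2)
        rw [Matrix.kroneckerMap_apply]
        rfl
      rw [expandR g x x]
      rw [Finset.sum_congr rfl fun p _ => Finset.sum_congr rfl fun q _ => by rw [hbase p q]]
      have hdot : star (fun p => bM.repr x p) ⬝ᵥ ((K₁ ⊗ₖ K₂) *ᵥ fun p => bM.repr x p)
          = ∑ p, ∑ q, bM.repr x p * bM.repr x q * (K₁ ⊗ₖ K₂) p q := by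
        simp only [dotProduct, Matrix.mulVec, Pi.star_apply, star_trivial,
          Finset.mul_sum]
        refine Finset.sum_congr rfl fun p _ => Finset.sum_congr rfl fun q _ => ?_
        ring
      rw [← hdot]
      exact hKpsd.dotProduct_mulVec_nonneg _
    have hfg : f = g := sym_pos_sq_unique f g hfs hgs hfp hgp hffgg
    intro p
    have h1 : f (bM p) = g (bM p) := by rw [hfg]
    have h2 : f (bM p) = W p := h1.trans (hgbM p)
    have h3 := congrArg (Subtype.val) h2
    have h4 : Tp ((bM p : HermM (Fin d₁ × Fin d₂)) : Matrix (Fin d₁ × Fin d₂)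
        (Fin d₁ × Fin d₂) ℂ) = T₁ (D p.1) ⊗ₖ T₂ (E p.2) := h3
    rw [hbM p] at h4
    exact h4
  exact ⟨hermM, liM, sumM, trM, GpEq, bornEq, pw,
    fun hDp hEp p => by rw [hM p]; exact kron_posSemidef (hDp p.1) (hEp p.2)⟩
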